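/- For all 0 < x ≤ 1, we have 2(1+x)·ln((3+x)/4) − x·ln x ≤ 0. -/

import Mathlib

theorem stmt_10 (x : ℝ) (h0 : 0 < x) (h1 : x ≤ 1) :
    2 * (1 + x) * Real.log ((3 + x) / 4) - x * Real.log x ≤ 0 := by
  -- Upper bound on log((3+x)/4)
  have hL : Real.log ((3 + x) / 4) ≤ (x - 1) / 4 := by
    have := Real.log_le_sub_one_of_pos (x := (3 + x) / 4) (by linarith)
    linarith
  -- Key lower bound: log x ≥ (x² - 1)/(2x)
  set u : ℝ := (1 - x ^ 2) / (2 * x) with hu_def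
  have hu : (0 : ℝ) ≤ u := div_nonneg (by nlinarith) (by linarith)
  have hexp : 1 + u + u ^ 2 / 2 ≤ Real.exp u := Real.quadratic_le_exp_of_nonneg hu
  have hquad : 1 / x ≤ 1 + u + u ^ 2 / 2 := by
    have h4 : (0:ℝ) ≤ (x - 1) ^ 4 := by positivity
    have key : 1 ≤ (1 + u + u ^ 2 / 2) * x := by
      rw [hu_def]
      field_simp
      nlinarith [mul_nonneg h0.le h4, mul_pos h0 h0]
    rw [div_le_iff₀ h0]
    linarith
  have hinv : 1 / x ≤ Real.exp u := hquad.trans hexp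
  have hlog : -Real.log x ≤ u := by
    have : Real.log (1 / x) ≤ u := by
      calc Real.log (1 / x) ≤ Real.log (Real.exp u) :=
            Real.log_le_log (by positivity) hinv
        _ = u := Real.log_exp u
    rwa [Real.log_div one_ne_zero (ne_of_gt h0), Real.log_one, zero_sub] at this
  have hM : (x ^ 2 - 1) / 2 ≤ x * Real.log x := by
    have h2 : x * (-Real.log x) ≤ x * u := mul_le_mul_of_nonneg_left hlog h0.le
    have hx2 : x * u = (1 - x ^ 2) / 2 := by
      rw [hu_def]; field_simp
    nlinarith [h2]
  -- Combine
  have h2 : 2 * (1 + x) * Real.log ((3 + x) / 4) ≤ 2 * (1 + x) * ((x - 1) / 4) :=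
    mul_le_mul_of_nonneg_left hL (by linarith)
  nlinarith [h2, hM]
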